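/- Let $w_n \in W_n$ be any $n$-odometer. Then the set $\{g \in W_n : w_n g \text{ is an } n\text{-odometer}\}$ equals the Frattini subgroup $\Phi(W_n)$. -/

import Mathlib

/-- Leaves of the complete binary rooted tree of height `n`, recorded as the
big-endian bit string of the (0-indexed) leaf label. -/
abbrev Leaf (n : ℕ) := Fin n → Bool

/-- The function underlying the standard generator `a k` of `Aut(T_n)`:
it flips coordinate `n - k` of a leaf lying on the leftmost spine above level `n - k`
(this is the permutation `(1, 2^(k-1)+1)(2, 2^(k-1)+2) ⋯ (2^(k-1), 2^k)` of the leaves). -/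
def aFun (n k : ℕ) (ℓ : Leaf n) : Leaf n := fun t =>
  if (t : ℕ) = n - k ∧ (∀ s : Fin n, (s : ℕ) < n - k → ℓ s = false) then !(ℓ t) else ℓ t

lemma aFun_apply (n k : ℕ) (ℓ : Leaf n) (t : Fin n) :
    aFun n k ℓ t =
      if (t : ℕ) = n - k ∧ (∀ s : Fin n, (s : ℕ) < n - k → ℓ s = false) then !(ℓ t) else ℓ t :=
  rfl

lemma aFun_spine (n k : ℕ) (ℓ : Leaf n) (s : Fin n) (hs : (s : ℕ) < n - k) :
    aFun n k ℓ s = ℓ s := by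
  rw [aFun_apply, if_neg]
  rintro ⟨h1, -⟩
  omega

lemma aFun_cond (n k : ℕ) (ℓ : Leaf n) (t : Fin n) :
    ((t : ℕ) = n - k ∧ (∀ s : Fin n, (s : ℕ) < n - k → aFun n k ℓ s = false)) ↔
    ((t : ℕ) = n - k ∧ (∀ s : Fin n, (s : ℕ) < n - k → ℓ s = false)) := by
  constructor
  · rintro ⟨h1, h2⟩
    refine ⟨h1, fun s hs => ?_⟩
    have h := h2 s hs
    rwa [aFun_spine n k ℓ s hs] at h
  · rintro ⟨h1, h2⟩
    refine ⟨h1, fun s hs => ?_⟩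
    rw [aFun_spine n k ℓ s hs]
    exact h2 s hs

lemma aFun_involutive (n k : ℕ) : Function.Involutive (aFun n k) := by
  intro ℓ
  funext t
  rw [show aFun n k (aFun n k ℓ) t =
    (if (t : ℕ) = n - k ∧ (∀ s : Fin n, (s : ℕ) < n - k → aFun n k ℓ s = false)
      then !(aFun n k ℓ t) else aFun n k ℓ t) from rfl]
  by_cases h : (t : ℕ) = n - k ∧ (∀ s : Fin n, (s : ℕ) < n - k → ℓ s = false)
  · rw [if_pos ((aFun_cond n k ℓ t).mpr h), aFun_apply, if_pos h, Bool.not_not]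
  · rw [if_neg (fun hc => h ((aFun_cond n k ℓ t).mp hc)), aFun_apply, if_neg h]

/-- The standard generator `a_k` of `Aut(T_n)` (as a permutation of the leaves). -/
def aPerm (n k : ℕ) : Equiv.Perm (Leaf n) :=
  Function.Involutive.toPerm (aFun n k) (aFun_involutive n k)

lemma aPerm_apply (n k : ℕ) (ℓ : Leaf n) : aPerm n k ℓ = aFun n k ℓ := rfl

/-- The automorphism group `W_n` of the complete binary rooted tree of height `n`,
realized as the subgroup of permutations of the `2^n` leaves which, at every level `m`,
map leaves agreeing in their first `m` coordinates to leaves agreeing in their first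
`m` coordinates. -/
def treeGroup (n : ℕ) : Subgroup (Equiv.Perm (Leaf n)) where
  carrier := {σ | ∀ m : ℕ, ∀ i j : Leaf n,
    (∀ t : Fin n, (t : ℕ) < m → σ i t = σ j t) ↔ (∀ t : Fin n, (t : ℕ) < m → i t = j t)}
  one_mem' := by intro m i j; simp
  mul_mem' := by
    intro a b ha hb m i j
    simpa [Equiv.Perm.mul_apply] using (ha m (b i) (b j)).trans (hb m i j)
  inv_mem' := by
    intro a ha m i j
    simpa using (ha m (a⁻¹ i) (a⁻¹ j)).symm

lemma mem_treeGroup (n : ℕ) (σ : Equiv.Perm (Leaf n)) :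
    σ ∈ treeGroup n ↔ ∀ m : ℕ, ∀ i j : Leaf n,
      (∀ t : Fin n, (t : ℕ) < m → σ i t = σ j t) ↔ (∀ t : Fin n, (t : ℕ) < m → i t = j t) :=
  Iff.rfl

lemma aPerm_mem (n k : ℕ) : aPerm n k ∈ treeGroup n := by
  have D : ∀ (i j : Leaf n) (m : ℕ), (∀ t : Fin n, (t : ℕ) < m → i t = j t) →
      (∀ t : Fin n, (t : ℕ) < m → aFun n k i t = aFun n k j t) := by
    intro i j m hij t ht
    rw [aFun_apply, aFun_apply]
    by_cases h1 : (t : ℕ) = n - k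
    · have hsp : (∀ s : Fin n, (s : ℕ) < n - k → i s = false) ↔
          (∀ s : Fin n, (s : ℕ) < n - k → j s = false) := by
        constructor
        · intro h s hs
          rw [← hij s (by omega)]; exact h s hs
        · intro h s hs
          rw [hij s (by omega)]; exact h s hs
      by_cases h2 : ∀ s : Fin n, (s : ℕ) < n - k → i s = false
      · rw [if_pos ⟨h1, h2⟩, if_pos ⟨h1, hsp.mp h2⟩, hij t ht]
      · rw [if_neg (fun hc => h2 hc.2), if_neg (fun hc => h2 (hsp.mpr hc.2)), hij t ht]
    · rw [if_neg (fun hc => h1 hc.1), if_neg (fun hc => h1 hc.1), hij t ht]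
  rw [mem_treeGroup]
  intro m i j
  constructor
  · intro h t ht
    have h2 := D (aPerm n k i) (aPerm n k j) m (fun t ht => by
      simpa [aPerm_apply] using h t ht) t ht
    rwa [show aFun n k (aPerm n k i) = i from aFun_involutive n k i,
      show aFun n k (aPerm n k j) = j from aFun_involutive n k j] at h2
  · intro h t ht
    simpa [aPerm_apply] using D i j m h t ht

/-- The standard generator `a_k` as an element of `W_n`. -/
def aEl (n k : ℕ) : ↥(treeGroup n) := ⟨aPerm n k, aPerm_mem n k⟩

/-- The standard `k`-odometer `x_k = a_1 a_2 ⋯ a_k`, viewed inside `W_n`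
(via the natural inclusion of `W_k` acting on the left part of the tree). -/
def xEl (n k : ℕ) : ↥(treeGroup n) :=
  (((List.range k).map fun j => aEl n (j + 1))).prod

/-- `v_i = x_{i+2}^2`, viewed inside `W_n`. -/
def vEl (n i : ℕ) : ↥(treeGroup n) := (xEl n (i + 2)) ^ 2

/-- `m_n = a_{n-1} (x_{n-2})^{x_n}` (with `g^h = h g h⁻¹`), viewed inside `W_n`. -/
def mEl (n : ℕ) : ↥(treeGroup n) :=
  aEl n (n - 1) * (xEl n n * xEl n (n - 2) * (xEl n n)⁻¹)

/-- A permutation of the leaves of `T_n` is an `n`-odometer if it acts transitively on them. -/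
def IsOdometer (n : ℕ) (σ : Equiv.Perm (Leaf n)) : Prop :=
  ∀ i j : Leaf n, ∃ t : ℕ, (σ ^ t) i = j

/-- The generating set `{v_i : i ≤ k - 3}` of `V_k`, inside `W_n`. -/
def VsetK (n k : ℕ) : Set ↥(treeGroup n) := {g | ∃ i : ℕ, i + 3 ≤ k ∧ g = vEl n i}

/-- The subgroup `V_k = ⟨v_{k-3}, …, v_0⟩ ≤ W_n`. -/
def VgrpK (n k : ℕ) : Subgroup ↥(treeGroup n) := Subgroup.closure (VsetK n k)

/-- The group `M_k = ⟨x_k, v_{k-3}, …, v_0⟩` of Section 4, inside `W_n`. -/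
def MgrpK (n k : ℕ) : Subgroup ↥(treeGroup n) :=
  Subgroup.closure (insert (xEl n k) (VsetK n k))

/-- The normal closure `N_k = V_k^{M_k}` of `V_k` in `M_k`, inside `W_n`. -/
def NgrpK (n k : ℕ) : Subgroup ↥(treeGroup n) :=
  Subgroup.closure {g | ∃ m ∈ MgrpK n k, ∃ v ∈ VsetK n k, g = m * v * m⁻¹}

/-- The group `M_n = ⟨x_n, m_n, v_{n-3}, …, v_0⟩` of Section 5. -/
def MgrpB (n : ℕ) : Subgroup ↥(treeGroup n) :=
  Subgroup.closure (insert (xEl n n) (insert (mEl n) (VsetK n n)))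

/-- The normal closure `N_n = ⟨m_n, v_{n-3}, …, v_0⟩^{M_n}` of Section 5. -/
def NgrpB (n : ℕ) : Subgroup ↥(treeGroup n) :=
  Subgroup.closure {g | ∃ m ∈ MgrpB n, ∃ h ∈ insert (mEl n) (VsetK n n), g = m * h * m⁻¹}

/-- `U_n = V_n^{⟨x_n⟩}`. -/
def Ugrp (n : ℕ) : Subgroup ↥(treeGroup n) :=
  Subgroup.closure {g | ∃ m ∈ Subgroup.closure {xEl n n}, ∃ v ∈ VsetK n n, g = m * v * m⁻¹}

theorem Equiv.Perm.apply_inv_self {α : Type*} (f : Equiv.Perm α) (x : α) : f (f⁻¹ x) = x := by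
  simp

theorem Equiv.Perm.inv_apply_self {α : Type*} (f : Equiv.Perm α) (x : α) : f⁻¹ (f x) = x := by
  simp

/-! ### Auxiliary development -/

section Aux

open Subgroup

variable {n : ℕ}

/-- Two leaves agree on the first `m` coordinates. -/
def Ag (m : ℕ) (i j : Leaf n) : Prop := ∀ t : Fin n, (t : ℕ) < m → i t = j t

instance agDecidable (m : ℕ) (i j : Leaf n) : Decidable (Ag m i j) := by
  unfold Ag; infer_instance

lemma ag_refl (m : ℕ) (i : Leaf n) : Ag m i i := fun _ _ => rfl

lemma ag_symm {m : ℕ} {i j : Leaf n} (h : Ag m i j) : Ag m j i := fun t ht => (h t ht).symm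

lemma ag_trans {m : ℕ} {i j k : Leaf n} (h : Ag m i j) (h' : Ag m j k) : Ag m i k :=
  fun t ht => (h t ht).trans (h' t ht)

lemma ag_mono {m m' : ℕ} (hm : m ≤ m') {i j : Leaf n} (h : Ag m' i j) : Ag m i j :=
  fun t ht => h t (lt_of_lt_of_le ht hm)

lemma ag_n_iff {i j : Leaf n} : Ag n i j ↔ i = j := by
  constructor
  · intro h; funext t; exact h t t.2
  · rintro rfl; exact ag_refl n i

lemma tg_iff {σ : Equiv.Perm (Leaf n)} (hσ : σ ∈ treeGroup n) (m : ℕ) (i j : Leaf n) :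
    Ag m (σ i) (σ j) ↔ Ag m i j := hσ m i j

/-- The "switch bit" of `σ` at leaf `ℓ`, coordinate `m`. -/
def eb (σ : Equiv.Perm (Leaf n)) (ℓ : Leaf n) (m : Fin n) : Bool := xor (σ ℓ m) (ℓ m)

lemma eb_congr {σ : Equiv.Perm (Leaf n)} (hσ : σ ∈ treeGroup n) {i j : Leaf n} (m : Fin n)
    (h : Ag (m : ℕ) i j) : eb σ i m = eb σ j m := by
  by_cases hb : i m = j m
  · have h1 : Ag ((m : ℕ) + 1) i j := by
      intro t ht
      rcases Nat.lt_succ_iff_lt_or_eq.mp ht with ht' | ht'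
      · exact h t ht'
      · have : t = m := Fin.ext ht'
        subst this; exact hb
    have h2 := (tg_iff hσ ((m : ℕ) + 1) i j).mpr h1
    have h3 : σ i m = σ j m := h2 m (Nat.lt_succ_self _)
    simp [eb, h3, hb]
  · have hb' : i m = !(j m) := by
      cases hji : j m <;> cases hij : i m <;> simp_all
    have h2 : σ i m = !(σ j m) := by
      by_contra hc
      have hc' : σ i m = σ j m := by
        cases hx : σ j m <;> cases hy : σ i m <;> simp_all
      have h1 : Ag ((m : ℕ) + 1) (σ i) (σ j) := by
        intro t ht
        rcases Nat.lt_succ_iff_lt_or_eq.mp ht with ht' | ht'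
        · exact (tg_iff hσ (m : ℕ) i j).mpr h t ht'
        · have : t = m := Fin.ext ht'
          subst this; exact hc'
      have := (tg_iff hσ ((m : ℕ) + 1) i j).mp h1 m (Nat.lt_succ_self _)
      rw [this] at hb; exact hb rfl
    rw [eb, eb, hb', h2]
    cases σ j m <;> cases j m <;> rfl

lemma eb_mul (σ τ : Equiv.Perm (Leaf n)) (ℓ : Leaf n) (m : Fin n) :
    eb (σ * τ) ℓ m = xor (eb σ (τ ℓ) m) (eb τ ℓ m) := by
  simp only [eb, Equiv.Perm.mul_apply]
  cases σ (τ ℓ) m <;> cases τ ℓ m <;> cases ℓ m <;> rfl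

lemma eb_one (ℓ : Leaf n) (m : Fin n) : eb (1 : Equiv.Perm (Leaf n)) ℓ m = false := by
  simp [eb]

/-- Indicator of a boolean in `ZMod 2`. -/
def I2 (b : Bool) : ZMod 2 := if b then 1 else 0

lemma I2_xor (a b : Bool) : I2 (xor a b) = I2 a + I2 b := by
  cases a <;> cases b <;> decide

lemma I2_eq_one {b : Bool} (h : I2 b = 1) : b = true := by
  cases b
  · exact absurd h (by decide)
  · rfl

lemma I2_eq_zero {b : Bool} (h : I2 b = 0) : b = false := by
  cases b
  · rfl
  · exact absurd h (by decide)

lemma z2_cases (a : ZMod 2) : a = 0 ∨ a = 1 := by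
  revert a; decide

lemma z2_add_eq_zero' : ∀ (a b : ZMod 2), a + b = 0 → a = b := by decide

lemma z2_add_eq_zero {a b : ZMod 2} (h : a + b = 0) : a = b := z2_add_eq_zero' a b h

/-- The set of leaves whose coordinates `≥ m` vanish: a transversal of level-`m` vertices. -/
def Tm (n : ℕ) (m : Fin n) : Finset (Leaf n) :=
  Finset.univ.filter (fun ℓ => ∀ t : Fin n, m ≤ t → ℓ t = false)

/-- The level-`m` parity (number of subtree switches at level `m`, mod 2). -/
def sv (σ : Equiv.Perm (Leaf n)) (m : Fin n) : ZMod 2 := ∑ ℓ ∈ Tm n m, I2 (eb σ ℓ m)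

/-- Truncation of a leaf to its first `m` coordinates. -/
def trc (m : ℕ) (ℓ : Leaf n) : Leaf n := fun t => if (t : ℕ) < m then ℓ t else false

lemma trc_ag (m : ℕ) (ℓ : Leaf n) : Ag m (trc m ℓ) ℓ := by
  intro t ht; simp [trc, ht]

lemma trc_mem (m : Fin n) (ℓ : Leaf n) : trc (m : ℕ) ℓ ∈ Tm n m := by
  simp only [Tm, Finset.mem_filter, Finset.mem_univ, true_and]
  intro t ht
  have : ¬ ((t : ℕ) < (m : ℕ)) := not_lt.mpr (Fin.le_def.mp ht)
  simp [trc, this]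

lemma trc_eq_of_mem {m : Fin n} {ℓ : Leaf n} (h : ℓ ∈ Tm n m) : trc (m : ℕ) ℓ = ℓ := by
  simp only [Tm, Finset.mem_filter, Finset.mem_univ, true_and] at h
  funext t
  by_cases ht : (t : ℕ) < (m : ℕ)
  · simp [trc, ht]
  · simp only [trc, ht, if_false]
    exact (h t (Fin.le_def.mpr (not_lt.mp ht))).symm

lemma trc_eq_of_ag {m : ℕ} {i j : Leaf n} (h : Ag m i j) : trc m i = trc m j := by
  funext t
  by_cases ht : (t : ℕ) < m
  · simp [trc, ht, h t ht]
  · simp [trc, ht]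

lemma ag_of_trc_eq {m : ℕ} {i j : Leaf n} (h : trc m i = trc m j) : Ag m i j := by
  intro t ht
  have := congrFun h t
  simpa [trc, ht] using this

lemma card_Tm (m : Fin n) : (Tm n m).card = 2 ^ (m : ℕ) := by
  classical
  have : (Tm n m).card = (Finset.univ : Finset (Fin (m : ℕ) → Bool)).card := by
    apply Finset.card_nbij' (fun ℓ => fun t : Fin (m : ℕ) =>
        ℓ ⟨t, lt_of_lt_of_le t.2 (le_of_lt m.2)⟩)
      (fun p => fun t : Fin n => if h : (t : ℕ) < (m : ℕ) then p ⟨(t : ℕ), h⟩ else false)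
    · intro ℓ _; exact Finset.mem_univ _
    · intro p _
      simp only [Tm, Finset.mem_coe, Finset.mem_filter, Finset.mem_univ, true_and]
      intro t ht
      have : ¬ ((t : ℕ) < (m : ℕ)) := not_lt.mpr (Fin.le_def.mp ht)
      simp [this]
    · intro ℓ hℓ
      simp only [Tm, Finset.mem_coe, Finset.mem_filter, Finset.mem_univ, true_and] at hℓ
      funext t
      by_cases ht : (t : ℕ) < (m : ℕ)
      · simp [ht]
      · simp only [ht, dif_neg, not_false_iff]
        exact (hℓ t (Fin.le_def.mpr (not_lt.mp ht))).symm
    · intro p _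
      funext t
      simp [t.2]
  rw [this]
  simp

lemma sum_reindex_trc {τ : Equiv.Perm (Leaf n)} (hτ : τ ∈ treeGroup n) (m : Fin n)
    (f : Leaf n → ZMod 2) :
    ∑ ℓ ∈ Tm n m, f (trc (m : ℕ) (τ ℓ)) = ∑ ℓ ∈ Tm n m, f ℓ := by
  apply Finset.sum_nbij' (i := fun ℓ => trc (m : ℕ) (τ ℓ)) (j := fun ℓ => trc (m : ℕ) (τ⁻¹ ℓ))
  · intro ℓ _; exact trc_mem m _
  · intro ℓ _; exact trc_mem m _
  · intro ℓ hℓ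
    have h1 : Ag (m : ℕ) (trc (m : ℕ) (τ ℓ)) (τ ℓ) := trc_ag _ _
    have h2 : Ag (m : ℕ) (τ⁻¹ (trc (m : ℕ) (τ ℓ))) (τ⁻¹ (τ ℓ)) := by
      rw [← tg_iff hτ (m : ℕ)]
      simpa using h1
    rw [Equiv.Perm.inv_apply_self] at h2
    rw [trc_eq_of_ag h2, trc_eq_of_mem hℓ]
  · intro ℓ hℓ
    have h1 : Ag (m : ℕ) (trc (m : ℕ) (τ⁻¹ ℓ)) (τ⁻¹ ℓ) := trc_ag _ _
    have h2 : Ag (m : ℕ) (τ (trc (m : ℕ) (τ⁻¹ ℓ))) (τ (τ⁻¹ ℓ)) := (tg_iff hτ _ _ _).mpr h1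
    rw [Equiv.Perm.apply_inv_self] at h2
    rw [trc_eq_of_ag h2, trc_eq_of_mem hℓ]
  · intro ℓ _; rfl

lemma sv_mul {σ τ : Equiv.Perm (Leaf n)} (hσ : σ ∈ treeGroup n) (hτ : τ ∈ treeGroup n)
    (m : Fin n) : sv (σ * τ) m = sv σ m + sv τ m := by
  unfold sv
  have h1 : ∀ ℓ ∈ Tm n m, I2 (eb (σ * τ) ℓ m) =
      I2 (eb σ (trc (m : ℕ) (τ ℓ)) m) + I2 (eb τ ℓ m) := by
    intro ℓ _
    rw [eb_mul, I2_xor]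
    congr 2
    exact (eb_congr hσ m (trc_ag _ _)).symm
  rw [Finset.sum_congr rfl h1, Finset.sum_add_distrib]
  congr 1
  exact sum_reindex_trc hτ m (fun ℓ => I2 (eb σ ℓ m))

lemma sv_one (m : Fin n) : sv (1 : Equiv.Perm (Leaf n)) m = 0 := by
  unfold sv
  rw [Finset.sum_eq_zero]
  intro ℓ _
  rw [eb_one]; rfl

lemma sv_inv {σ : Equiv.Perm (Leaf n)} (hσ : σ ∈ treeGroup n) (m : Fin n) :
    sv σ⁻¹ m = sv σ m := by
  have h := sv_mul hσ (inv_mem hσ) m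
  rw [mul_inv_cancel, sv_one] at h
  exact (z2_add_eq_zero h.symm).symm

end Aux
section Aux2

open Subgroup

variable {n : ℕ} {σ : Equiv.Perm (Leaf n)}

lemma eb_eq_false {τ : Equiv.Perm (Leaf n)} {ℓ : Leaf n} {m : Fin n}
    (h : eb τ ℓ m = false) : τ ℓ m = ℓ m := by
  revert h
  simp only [eb]
  cases τ ℓ m <;> cases ℓ m <;> simp

lemma eb_pow_sum (ℓ : Leaf n) (m : Fin n) (d : ℕ) :
    I2 (eb (σ ^ d) ℓ m) = ∑ j ∈ Finset.range d, I2 (eb σ ((σ ^ j) ℓ) m) := by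
  induction d with
  | zero => simp [pow_zero, eb_one, I2]
  | succ d ih =>
    rw [pow_succ' σ d, eb_mul, I2_xor, ih, Finset.sum_range_succ]
    ring

lemma ag_pow_sub (hσ : σ ∈ treeGroup n) {a b : ℕ} (hab : a ≤ b) {m : ℕ} {ℓ : Leaf n}
    (h : Ag m ((σ ^ a) ℓ) ((σ ^ b) ℓ)) : Ag m ((σ ^ (b - a)) ℓ) ℓ := by
  have hb : σ ^ b = σ ^ a * σ ^ (b - a) := by
    rw [← pow_add]; congr 1; omega
  rw [hb, Equiv.Perm.mul_apply] at h
  exact ag_symm ((tg_iff (pow_mem hσ a) m _ _).mp h)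

lemma bit_step (hσ : σ ∈ treeGroup n) {m : ℕ} (hmn : m < n)
    (hper : ∀ ℓ d, Ag m ((σ ^ d) ℓ) ℓ ↔ 2 ^ m ∣ d) (ℓ : Leaf n) :
    I2 (eb (σ ^ 2 ^ m) ℓ ⟨m, hmn⟩) = sv σ ⟨m, hmn⟩ := by
  set M : Fin n := ⟨m, hmn⟩ with hM
  rw [eb_pow_sum]
  have h1 : ∀ j ∈ Finset.range (2 ^ m), I2 (eb σ ((σ ^ j) ℓ) M) =
      I2 (eb σ (trc m ((σ ^ j) ℓ)) M) := by
    intro j _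
    exact congrArg I2 (eb_congr hσ M (trc_ag m _)).symm
  rw [Finset.sum_congr rfl h1]
  have hinj : ∀ j ∈ Finset.range (2 ^ m), ∀ j' ∈ Finset.range (2 ^ m),
      trc m ((σ ^ j) ℓ) = trc m ((σ ^ j') ℓ) → j = j' := by
    have key : ∀ j j', j ≤ j' → j' < 2 ^ m →
        trc m ((σ ^ j) ℓ) = trc m ((σ ^ j') ℓ) → j = j' := by
      intro j j' hle hlt he
      have h2 : Ag m ((σ ^ j) ℓ) ((σ ^ j') ℓ) := ag_of_trc_eq he
      have h3 : 2 ^ m ∣ (j' - j) := (hper ℓ (j' - j)).mp (ag_pow_sub hσ hle h2)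
      by_cases hjj : j' - j = 0
      · omega
      · have h4 : j' - j = 0 := Nat.eq_zero_of_dvd_of_lt h3 (by omega)
        omega
    intro j hj j' hj' he
    simp only [Finset.mem_range] at hj hj'
    rcases le_total j j' with h | h
    · exact key j j' h hj' he
    · exact (key j' j h hj he.symm).symm
  apply Finset.sum_nbij (i := fun j => trc m ((σ ^ j) ℓ))
  · intro j _; exact trc_mem M _
  · intro j hj j' hj' he
    exact hinj j hj j' hj' he
  · intro b hb
    have hcard : (Tm n M).card ≤ (Finset.range (2 ^ m)).card := by
      rw [card_Tm, Finset.card_range]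
    obtain ⟨a, ha, hab⟩ := Finset.surj_on_of_inj_on_of_card_le
      (fun j (_ : j ∈ Finset.range (2 ^ m)) => trc m ((σ ^ j) ℓ))
      (fun j _ => trc_mem M _) (fun j j' hj hj' he => hinj j hj j' hj' he) hcard b hb
    exact ⟨a, ha, hab.symm⟩
  · intro j _; rfl

lemma ag_pow_iff (hσ : σ ∈ treeGroup n) : ∀ {m : ℕ}, m ≤ n →
    (∀ j : Fin n, (j : ℕ) < m → sv σ j = 1) →
    ∀ (ℓ : Leaf n) (d : ℕ), Ag m ((σ ^ d) ℓ) ℓ ↔ 2 ^ m ∣ d := by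
  intro m
  induction m with
  | zero =>
    intro _ _ ℓ d
    constructor
    · intro _; simpa using one_dvd d
    · intro _ t ht; exact absurd ht (Nat.not_lt_zero _)
  | succ m ih =>
    intro hm hs ℓ d
    have hmn : m < n := Nat.lt_of_lt_of_le (Nat.lt_succ_self m) hm
    have hper : ∀ ℓ d, Ag m ((σ ^ d) ℓ) ℓ ↔ 2 ^ m ∣ d :=
      fun ℓ d => ih (le_of_lt hmn) (fun j hj => hs j (by omega)) ℓ d
    set M : Fin n := ⟨m, hmn⟩ with hMdef
    have hsM : sv σ M = 1 := hs M (Nat.lt_succ_self m)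
    have hbit : ∀ ℓ' : Leaf n, eb (σ ^ 2 ^ m) ℓ' M = true := by
      intro ℓ'
      apply I2_eq_one
      rw [bit_step hσ hmn hper ℓ']
      exact hsM
    have hiter : ∀ (k : ℕ) (ℓ' : Leaf n), I2 (eb (σ ^ (2 ^ m * k)) ℓ' M) = (k : ZMod 2) := by
      intro k
      induction k with
      | zero => intro ℓ'; rw [mul_zero, pow_zero, eb_one]; simp [I2]
      | succ k ihk =>
        intro ℓ'
        have hp : σ ^ (2 ^ m * (k + 1)) = σ ^ 2 ^ m * σ ^ (2 ^ m * k) := by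
          rw [← pow_add]; congr 1; ring
        rw [hp, eb_mul, I2_xor, hbit, ihk]
        show I2 true + (k : ZMod 2) = ((k + 1 : ℕ) : ZMod 2)
        push_cast
        show (1 : ZMod 2) + (k : ZMod 2) = (k : ZMod 2) + 1
        ring
    constructor
    · intro h
      obtain ⟨k, rfl⟩ := (hper ℓ d).mp (ag_mono (Nat.le_succ m) h)
      have h2 : eb (σ ^ (2 ^ m * k)) ℓ M = false := by
        have h2' := h M (Nat.lt_succ_self m)
        simp only [eb, h2']
        cases ℓ M <;> rfl
      have h3 : (k : ZMod 2) = 0 := by rw [← hiter k ℓ, h2]; rfl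
      have h4 : 2 ∣ k := by rwa [ZMod.natCast_eq_zero_iff] at h3
      obtain ⟨k', rfl⟩ := h4
      exact ⟨k', by ring⟩
    · rintro ⟨k, rfl⟩
      have h1 : Ag m ((σ ^ (2 ^ (m + 1) * k)) ℓ) ℓ := (hper ℓ _).mpr ⟨2 * k, by ring⟩
      have h2 : eb (σ ^ (2 ^ (m + 1) * k)) ℓ M = false := by
        apply I2_eq_zero
        have hd : 2 ^ (m + 1) * k = 2 ^ m * (2 * k) := by ring
        have h20 : ((2 * k : ℕ) : ZMod 2) = 0 := by
          rw [ZMod.natCast_eq_zero_iff]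
          exact Dvd.intro k rfl
        rw [hd, hiter, h20]
      intro t ht
      rcases Nat.lt_succ_iff_lt_or_eq.mp ht with h' | h'
      · exact h1 t h'
      · have htM : t = M := Fin.ext h'
        rw [htM]
        exact eb_eq_false h2

lemma odometer_iff (hσ : σ ∈ treeGroup n) :
    IsOdometer n σ ↔ ∀ m : Fin n, sv σ m = 1 := by
  constructor
  · intro hodo
    suffices H : ∀ k : ℕ, ∀ hk : k < n, sv σ ⟨k, hk⟩ = 1 by
      intro m; have := H m.1 m.2; simpa using this
    intro k
    induction k using Nat.strong_induction_on with
    | _ k IH =>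
      intro hk
      by_contra h0
      have h0' : sv σ ⟨k, hk⟩ = 0 := (z2_cases _).resolve_right h0
      have hper : ∀ ℓ d, Ag k ((σ ^ d) ℓ) ℓ ↔ 2 ^ k ∣ d :=
        ag_pow_iff hσ (le_of_lt hk) (fun j hj => by
          have := IH j.1 hj j.2
          simpa using this)
      set K : Fin n := ⟨k, hk⟩ with hKdef
      have hbit : ∀ ℓ : Leaf n, eb (σ ^ 2 ^ k) ℓ K = false := by
        intro ℓ
        apply I2_eq_zero
        rw [bit_step hσ hk hper ℓ]
        exact h0'
      have hfix : ∀ ℓ : Leaf n, Ag (k + 1) ((σ ^ 2 ^ k) ℓ) ℓ := by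
        intro ℓ t ht
        rcases Nat.lt_succ_iff_lt_or_eq.mp ht with h' | h'
        · exact (hper ℓ (2 ^ k)).mpr dvd_rfl t h'
        · have htK : t = K := Fin.ext h'
          rw [htK]
          exact eb_eq_false (hbit ℓ)
      have hmod : ∀ (t : ℕ) (ℓ : Leaf n), Ag (k + 1) ((σ ^ t) ℓ) ((σ ^ (t % 2 ^ k)) ℓ) := by
        intro t
        induction t using Nat.strong_induction_on with
        | _ t IHt =>
          intro ℓ
          by_cases ht : t < 2 ^ k
          · rw [Nat.mod_eq_of_lt ht]; exact ag_refl _ _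
          · push_neg at ht
            have hp : σ ^ t = σ ^ (t - 2 ^ k) * σ ^ 2 ^ k := by
              rw [← pow_add]; congr 1; omega
            have hpos : 0 < 2 ^ k := Nat.pow_pos (by norm_num)
            have h1 : Ag (k + 1) ((σ ^ t) ℓ) ((σ ^ (t - 2 ^ k)) ℓ) := by
              rw [hp, Equiv.Perm.mul_apply]
              exact (tg_iff (pow_mem hσ (t - 2 ^ k)) (k + 1) _ _).mpr (hfix ℓ)
            have h2 := IHt (t - 2 ^ k) (by omega) ℓ
            have hmodeq : (t - 2 ^ k) % 2 ^ k = t % 2 ^ k := by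
              conv_rhs => rw [Nat.mod_eq_sub_mod ht]
            rw [hmodeq] at h2
            exact ag_trans h1 h2
      -- contradiction via counting level-(k+1) prefixes
      have hk1 : k + 1 ≤ n := hk
      set ℓ0 : Leaf n := fun _ => false with hℓ0
      set G : Fin (2 ^ k) → (Fin (k + 1) → Bool) := fun t s =>
        (σ ^ (t : ℕ)) ℓ0 ⟨s.1, lt_of_lt_of_le s.2 hk1⟩ with hG
      have hnsurj : ¬ Function.Surjective G := by
        intro hsurj
        have hcard := Fintype.card_le_of_surjective G hsurj
        simp only [Fintype.card_fun, Fintype.card_fin, Fintype.card_bool] at hcard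
        have : (2 : ℕ) ^ (k + 1) ≤ 2 ^ k := hcard
        have := Nat.pow_lt_pow_right (by norm_num : 1 < 2) (Nat.lt_succ_self k)
        omega
      rw [Function.Surjective] at hnsurj
      push_neg at hnsurj
      obtain ⟨p, hp⟩ := hnsurj
      set j : Leaf n := fun t => if h : (t : ℕ) < k + 1 then p ⟨(t : ℕ), h⟩ else false with hj
      obtain ⟨t, htj⟩ := hodo ℓ0 j
      have hpos : 0 < 2 ^ k := Nat.pow_pos (by norm_num)
      apply hp ⟨t % 2 ^ k, Nat.mod_lt _ hpos⟩
      funext s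
      have h1 : Ag (k + 1) ((σ ^ t) ℓ0) ((σ ^ (t % 2 ^ k)) ℓ0) := hmod t ℓ0
      have h2 := (h1 ⟨s.1, lt_of_lt_of_le s.2 hk1⟩ s.2).symm
      rw [htj] at h2
      rw [hG]
      simp only []
      rw [h2, hj]
      simp [s.2]
  · intro hs i j
    have hper := ag_pow_iff hσ (le_refl n) (fun j _ => by
      have := hs j; simpa using this)
    set F : Fin (2 ^ n) → Leaf n := fun t => (σ ^ (t : ℕ)) i with hF
    have hinj : Function.Injective F := by
      intro a b hab
      have key : ∀ a b : Fin (2 ^ n), (a : ℕ) ≤ (b : ℕ) → F a = F b → a = b := by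
        intro a b hle he
        have h2 : Ag n ((σ ^ (a : ℕ)) i) ((σ ^ (b : ℕ)) i) := ag_n_iff.mpr he
        have h3 : 2 ^ n ∣ ((b : ℕ) - (a : ℕ)) :=
          (hper i _).mp (ag_pow_sub hσ hle h2)
        have ha2 := a.2
        have hb2 := b.2
        by_cases hab0 : (b : ℕ) - (a : ℕ) = 0
        · exact Fin.ext (by omega)
        · have : (b : ℕ) - (a : ℕ) = 0 := Nat.eq_zero_of_dvd_of_lt h3 (by omega)
          exact Fin.ext (by omega)
      rcases le_total (a : ℕ) (b : ℕ) with h | h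
      · exact key a b h hab
      · exact (key b a h hab.symm).symm
    have hbij : Function.Bijective F := by
      rw [Fintype.bijective_iff_injective_and_card]
      constructor
      · exact hinj
      · simp [Fintype.card_fun]
    obtain ⟨t, ht⟩ := hbij.2 j
    exact ⟨(t : ℕ), ht⟩

end Aux2
section Aux3

open Subgroup

variable {n : ℕ}

lemma ag_pow_two_pow {σ : Equiv.Perm (Leaf n)} (hσ : σ ∈ treeGroup n) :
    ∀ {m : ℕ}, m ≤ n → ∀ ℓ : Leaf n, Ag m ((σ ^ 2 ^ m) ℓ) ℓ := by
  intro m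
  induction m with
  | zero => intro _ ℓ t ht; exact absurd ht (Nat.not_lt_zero _)
  | succ m ih =>
    intro hm ℓ
    have hmn : m < n := Nat.lt_of_lt_of_le (Nat.lt_succ_self m) hm
    set M : Fin n := ⟨m, hmn⟩ with hM
    have hp : σ ^ 2 ^ (m + 1) = σ ^ 2 ^ m * σ ^ 2 ^ m := by
      rw [← pow_add]; congr 1; ring
    have ihm := ih (le_of_lt hmn)
    intro t ht
    rcases Nat.lt_succ_iff_lt_or_eq.mp ht with h' | h'
    · -- coordinates below m
      have h1 : Ag m ((σ ^ 2 ^ (m + 1)) ℓ) ℓ := by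
        rw [hp]
        intro u hu
        calc (σ ^ 2 ^ m * σ ^ 2 ^ m) ℓ u = (σ ^ 2 ^ m) ((σ ^ 2 ^ m) ℓ) u := by
              rw [Equiv.Perm.mul_apply]
          _ = (σ ^ 2 ^ m) ℓ u := ihm ((σ ^ 2 ^ m) ℓ) u hu
          _ = ℓ u := ihm ℓ u hu
      exact h1 t h'
    · have htM : t = M := Fin.ext h'
      rw [htM]
      have h2 : eb (σ ^ 2 ^ (m + 1)) ℓ M = false := by
        rw [hp, eb_mul]
        have h3 : eb (σ ^ 2 ^ m) ((σ ^ 2 ^ m) ℓ) M = eb (σ ^ 2 ^ m) ℓ M :=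
          eb_congr (pow_mem hσ _) M (ihm ℓ)
        rw [h3]
        cases eb (σ ^ 2 ^ m) ℓ M <;> rfl
      exact eb_eq_false h2

lemma pow_two_pow_eq_one (g : ↥(treeGroup n)) : g ^ 2 ^ n = 1 := by
  have h : ((g : Equiv.Perm (Leaf n)) ^ 2 ^ n) = 1 := by
    apply Equiv.ext
    intro ℓ
    have := ag_pow_two_pow g.2 (le_refl n) ℓ
    rw [ag_n_iff.mp this]
    rfl
  ext1
  rw [SubgroupClass.coe_pow, h]
  rfl

lemma treeGroup_isPGroup : IsPGroup 2 ↥(treeGroup n) :=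
  fun g => ⟨n, pow_two_pow_eq_one g⟩

/-- Level parities, as a function on the subgroup. -/
def svU (g : ↥(treeGroup n)) (m : Fin n) : ZMod 2 := sv (g : Equiv.Perm (Leaf n)) m

lemma svU_mul (g h : ↥(treeGroup n)) (m : Fin n) : svU (g * h) m = svU g m + svU h m :=
  sv_mul g.2 h.2 m

lemma svU_one (m : Fin n) : svU (1 : ↥(treeGroup n)) m = 0 := sv_one m

lemma svU_inv (g : ↥(treeGroup n)) (m : Fin n) : svU g⁻¹ m = svU g m := sv_inv g.2 m

lemma eb_aPerm (k : ℕ) (ℓ : Leaf n) (m : Fin n) :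
    eb (aPerm n k) ℓ m =
      decide ((m : ℕ) = n - k ∧ ∀ s : Fin n, (s : ℕ) < n - k → ℓ s = false) := by
  rw [eb, aPerm_apply, aFun_apply]
  by_cases h : (m : ℕ) = n - k ∧ ∀ s : Fin n, (s : ℕ) < n - k → ℓ s = false
  · rw [if_pos h, decide_eq_true h]
    cases ℓ m <;> rfl
  · rw [if_neg h, decide_eq_false h]
    cases ℓ m <;> rfl

lemma sv_aPerm (k : ℕ) (m : Fin n) :
    sv (aPerm n k) m = if (m : ℕ) = n - k then 1 else 0 := by
  unfold sv
  by_cases h : (m : ℕ) = n - k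
  · rw [if_pos h]
    rw [Finset.sum_eq_single (fun _ => false : Leaf n)]
    · rw [eb_aPerm]
      have : ((m : ℕ) = n - k ∧ ∀ s : Fin n, (s : ℕ) < n - k →
          (fun _ => false : Leaf n) s = false) := ⟨h, fun _ _ => rfl⟩
      rw [decide_eq_true this]
      rfl
    · intro ℓ hℓ hne
      rw [eb_aPerm]
      have : ¬ ((m : ℕ) = n - k ∧ ∀ s : Fin n, (s : ℕ) < n - k → ℓ s = false) := by
        rintro ⟨h1, h2⟩
        apply hne
        simp only [Tm, Finset.mem_filter, Finset.mem_univ, true_and] at hℓ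
        funext t
        by_cases ht : (t : ℕ) < n - k
        · exact h2 t ht
        · exact hℓ t (Fin.le_def.mpr (by omega))
      rw [decide_eq_false this]
      rfl
    · intro habs
      exfalso
      apply habs
      simp only [Tm, Finset.mem_filter, Finset.mem_univ, true_and]
      intro t _
      trivial
  · rw [if_neg h]
    apply Finset.sum_eq_zero
    intro ℓ _
    rw [eb_aPerm]
    have : ¬ ((m : ℕ) = n - k ∧ ∀ s : Fin n, (s : ℕ) < n - k → ℓ s = false) := by
      rintro ⟨h1, _⟩; exact h h1
    rw [decide_eq_false this]
    rfl

lemma svU_aEl (k : ℕ) (m : Fin n) :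
    svU (aEl n k) m = if (m : ℕ) = n - k then 1 else 0 := sv_aPerm k m

lemma svU_list_prod (L : List ↥(treeGroup n)) (m : Fin n) :
    svU L.prod m = (L.map (fun g => svU g m)).sum := by
  induction L with
  | nil => simpa using svU_one m
  | cons g L ih =>
    rw [List.prod_cons, svU_mul, List.map_cons, List.sum_cons, ih]

lemma list_range_sum {M : Type*} [AddCommMonoid M] (c : ℕ) (f : ℕ → M) :
    ((List.range c).map f).sum = ∑ j ∈ Finset.range c, f j := by
  induction c with
  | zero => simp
  | succ c ih =>
    rw [List.range_succ, List.map_append, List.sum_append, Finset.sum_range_succ, ih]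
    simp

lemma svU_xEl (m : Fin n) : svU (xEl n n) m = 1 := by
  rw [xEl, svU_list_prod, List.map_map]
  have : ((List.range n).map (fun j => svU (aEl n (j + 1)) m)).sum =
      ∑ j ∈ Finset.range n, svU (aEl n (j + 1)) m := list_range_sum n _
  rw [show ((fun g => svU g m) ∘ fun j => aEl n (j + 1)) =
    (fun j => svU (aEl n (j + 1)) m) from rfl, this]
  have hm2 := m.2
  rw [Finset.sum_eq_single (n - 1 - (m : ℕ))]
  · rw [svU_aEl, if_pos (by omega)]
  · intro j hj hne
    rw [svU_aEl, if_neg (by rw [Finset.mem_range] at hj; omega)]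
  · intro habs
    exfalso
    apply habs
    rw [Finset.mem_range]
    omega

lemma xEl_mem_closure :
    xEl n n ∈ Subgroup.closure {g : ↥(treeGroup n) | ∃ k, 1 ≤ k ∧ k ≤ n ∧ g = aEl n k} := by
  apply list_prod_mem
  intro g hg
  rw [List.mem_map] at hg
  obtain ⟨j, hj, rfl⟩ := hg
  rw [List.mem_range] at hj
  exact subset_closure ⟨j + 1, by omega, by omega, rfl⟩

/-- `g` stabilizes all vertices up to level `m`. -/
def St (m : ℕ) (g : ↥(treeGroup n)) : Prop :=
  ∀ ℓ : Leaf n, Ag m ((g : Equiv.Perm (Leaf n)) ℓ) ℓ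

lemma St_one (m : ℕ) : St m (1 : ↥(treeGroup n)) := fun ℓ => by
  simp only [OneMemClass.coe_one, Equiv.Perm.one_apply]
  exact ag_refl m ℓ

lemma St_mul {m : ℕ} {g h : ↥(treeGroup n)} (hg : St m g) (hh : St m h) : St m (g * h) := by
  intro ℓ
  rw [Subgroup.coe_mul, Equiv.Perm.mul_apply]
  exact ag_trans (hg _) (hh ℓ)

lemma St_inv {m : ℕ} {g : ↥(treeGroup n)} (hg : St m g) : St m g⁻¹ := by
  intro ℓ
  set p : Equiv.Perm (Leaf n) := ((g⁻¹ : ↥(treeGroup n)) : Equiv.Perm (Leaf n)) with hp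
  have h1 : Ag m ((g : Equiv.Perm (Leaf n)) (p ℓ)) (p ℓ) := hg _
  have h2 : (g : Equiv.Perm (Leaf n)) (p ℓ) = ℓ := by
    rw [hp, ← Equiv.Perm.mul_apply, ← Subgroup.coe_mul, mul_inv_cancel]
    rfl
  rw [h2] at h1
  exact ag_symm h1

end Aux3
section Aux4

open Subgroup

variable {n : ℕ}

/-- The standard generating set `{a_1, …, a_n}` of `W_n`. -/
def Aset (n : ℕ) : Set ↥(treeGroup n) := {g | ∃ k, 1 ≤ k ∧ k ≤ n ∧ g = aEl n k}

lemma xEl_mem : xEl n n ∈ Subgroup.closure (Aset n) := xEl_mem_closure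

lemma z2_add_self (a : ZMod 2) : a + a = 0 := by revert a; decide

lemma pat_mul {m : Fin n} (g : ↥(treeGroup n)) {h : ↥(treeGroup n)} (hh : St (m : ℕ) h)
    (ℓ : Leaf n) :
    I2 (eb (↑(g * h) : Equiv.Perm (Leaf n)) ℓ m) =
      I2 (eb (g : Equiv.Perm (Leaf n)) ℓ m) + I2 (eb (h : Equiv.Perm (Leaf n)) ℓ m) := by
  rw [Subgroup.coe_mul, eb_mul, I2_xor]
  congr 2
  exact eb_congr g.2 m (hh ℓ)

lemma pat_inv {m : Fin n} {g : ↥(treeGroup n)} (hg : St (m : ℕ) g) (ℓ : Leaf n) :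
    I2 (eb (↑(g⁻¹) : Equiv.Perm (Leaf n)) ℓ m) = I2 (eb (g : Equiv.Perm (Leaf n)) ℓ m) := by
  have h1 := pat_mul (m := m) g⁻¹ hg ℓ
  rw [inv_mul_cancel] at h1
  have h2 : I2 (eb (↑(1 : ↥(treeGroup n)) : Equiv.Perm (Leaf n)) ℓ m) = 0 := by
    rw [OneMemClass.coe_one, eb_one]; rfl
  rw [h2] at h1
  exact z2_add_eq_zero h1.symm

lemma swap_gadget {m : ℕ} (hm : m < n) (ℓ₀ : Leaf n) :
    ∃ g : ↥(treeGroup n), g ∈ Subgroup.closure (Aset n) ∧ St m g ∧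
      ∀ ℓ : Leaf n, eb (g : Equiv.Perm (Leaf n)) ℓ ⟨m, hm⟩ = decide (Ag m ℓ ℓ₀) := by
  have hodo : IsOdometer n ((xEl n n : ↥(treeGroup n)) : Equiv.Perm (Leaf n)) :=
    (odometer_iff (xEl n n).2).mpr (fun j => svU_xEl j)
  obtain ⟨t, ht⟩ := hodo (fun _ => false) ℓ₀
  set x : ↥(treeGroup n) := xEl n n with hx
  set M : Fin n := ⟨m, hm⟩ with hM
  have hnm : n - (n - m) = m := by omega
  have h1nm : 1 ≤ n - m := by omega
  have ha_apply : ∀ (ℓ' : Leaf n) (s : Fin n), aPerm n (n - m) ℓ' s =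
      if ((s : ℕ) = m ∧ ∀ u : Fin n, (u : ℕ) < m → ℓ' u = false) then !(ℓ' s) else ℓ' s := by
    intro ℓ' s
    rw [aPerm_apply, aFun_apply, hnm]
  set g0 : ↥(treeGroup n) := x ^ t * aEl n (n - m) * (x ^ t)⁻¹ with hg0
  have hmem : g0 ∈ Subgroup.closure (Aset n) :=
    mul_mem (mul_mem (pow_mem xEl_mem t)
      (subset_closure ⟨n - m, h1nm, by omega, rfl⟩)) (inv_mem (pow_mem xEl_mem t))
  set y : Equiv.Perm (Leaf n) := ((x ^ t : ↥(treeGroup n)) : Equiv.Perm (Leaf n)) with hy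
  have hy2 : y ∈ treeGroup n := (x ^ t).2
  have hyz : y (fun _ => false) = ℓ₀ := by
    rw [hy, SubgroupClass.coe_pow]
    exact ht
  have hgapp : ∀ ℓ : Leaf n, (g0 : Equiv.Perm (Leaf n)) ℓ = y (aPerm n (n - m) (y⁻¹ ℓ)) := by
    intro ℓ
    rfl
  have hcond_iff : ∀ ℓ : Leaf n,
      (∀ u : Fin n, (u : ℕ) < m → (y⁻¹ ℓ) u = false) ↔ Ag m ℓ ℓ₀ := by
    intro ℓ
    have e1 : (∀ u : Fin n, (u : ℕ) < m → (y⁻¹ ℓ) u = false) ↔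
        Ag m (y⁻¹ ℓ) (fun _ => false) := Iff.rfl
    rw [e1, ← tg_iff hy2 m]
    rw [Equiv.Perm.apply_inv_self, hyz]
  have hmain : ∀ ℓ : Leaf n, Ag m ((g0 : Equiv.Perm (Leaf n)) ℓ) ℓ ∧
      eb (g0 : Equiv.Perm (Leaf n)) ℓ M = decide (Ag m ℓ ℓ₀) := by
    intro ℓ
    by_cases hc : ∀ u : Fin n, (u : ℕ) < m → (y⁻¹ ℓ) u = false
    · have h1 : Ag m (aPerm n (n - m) (y⁻¹ ℓ)) (y⁻¹ ℓ) := by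
        intro s hs
        rw [ha_apply, if_neg]
        rintro ⟨h1', -⟩
        omega
      have h2 : (aPerm n (n - m) (y⁻¹ ℓ)) M = !((y⁻¹ ℓ) M) := by
        rw [ha_apply, if_pos ⟨rfl, hc⟩]
      have hfix : Ag m ((g0 : Equiv.Perm (Leaf n)) ℓ) ℓ := by
        rw [hgapp]
        have h3 : Ag m (y (aPerm n (n - m) (y⁻¹ ℓ))) (y (y⁻¹ ℓ)) := (tg_iff hy2 m _ _).mpr h1
        rwa [Equiv.Perm.apply_inv_self] at h3
      refine ⟨hfix, ?_⟩
      have h4 : eb y (aPerm n (n - m) (y⁻¹ ℓ)) M = eb y (y⁻¹ ℓ) M := eb_congr hy2 M h1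
      rw [eb, eb, h2, Equiv.Perm.apply_inv_self] at h4
      have h5 : y (aPerm n (n - m) (y⁻¹ ℓ)) M = !(ℓ M) := by
        revert h4
        cases (y⁻¹ ℓ) M <;> cases ℓ M <;> cases y (aPerm n (n - m) (y⁻¹ ℓ)) M <;> simp
      rw [eb, hgapp, h5, decide_eq_true ((hcond_iff ℓ).mp hc)]
      cases ℓ M <;> rfl
    · have h6 : aPerm n (n - m) (y⁻¹ ℓ) = y⁻¹ ℓ := by
        funext s
        rw [ha_apply, if_neg]
        rintro ⟨-, h7⟩
        exact hc h7
      have h7 : (g0 : Equiv.Perm (Leaf n)) ℓ = ℓ := by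
        rw [hgapp, h6, Equiv.Perm.apply_inv_self]
      refine ⟨by rw [h7]; exact ag_refl m ℓ, ?_⟩
      rw [eb, h7, decide_eq_false (fun hag => hc ((hcond_iff ℓ).mpr hag))]
      cases ℓ M <;> rfl
  exact ⟨g0, hmem, fun ℓ => (hmain ℓ).1, fun ℓ => (hmain ℓ).2⟩

lemma gen_top (g : ↥(treeGroup n)) : g ∈ Subgroup.closure (Aset n) := by
  suffices H : ∀ (m : ℕ) (g : ↥(treeGroup n)), St (n - m) g → g ∈ Subgroup.closure (Aset n) by
    apply H n g
    intro ℓ t ht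
    rw [Nat.sub_self] at ht
    exact absurd ht (Nat.not_lt_zero _)
  intro m
  induction m with
  | zero =>
    intro g hg
    rw [Nat.sub_zero] at hg
    have hone : g = 1 := by
      ext1
      apply Equiv.ext
      intro ℓ
      rw [ag_n_iff.mp (hg ℓ)]
      rfl
    rw [hone]
    exact one_mem _
  | succ m ih =>
    intro g hg
    by_cases hcase : n ≤ m
    · have he : n - (m + 1) = n - m := by omega
      rw [he] at hg
      exact ih g hg
    · push_neg at hcase
      have hkn : n - (m + 1) < n := by omega
      set k := n - (m + 1) with hk
      have hk1 : n - m = k + 1 := by omega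
      set K : Fin n := ⟨k, hkn⟩ with hK
      classical
      choose c hcmem hcSt hcpat using fun ℓ₀ : Leaf n => swap_gadget hkn ℓ₀
      have inner : ∀ T : Finset (Leaf n), (∀ ℓ₀ ∈ T, ∀ s : Fin n, K ≤ s → ℓ₀ s = false) →
          ∀ g : ↥(treeGroup n), St k g →
          (∀ ℓ : Leaf n, eb (g : Equiv.Perm (Leaf n)) ℓ K = true → trc k ℓ ∈ T) →
          g ∈ Subgroup.closure (Aset n) := by
        intro T
        induction T using Finset.induction_on with
        | empty =>
          intro _ g hSt hsupp
          have hSt1 : St (k + 1) g := by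
            intro ℓ s hs
            rcases Nat.lt_succ_iff_lt_or_eq.mp hs with h' | h'
            · exact hSt ℓ s h'
            · have hsK : s = K := Fin.ext h'
              rw [hsK]
              apply eb_eq_false
              cases hbv : eb (g : Equiv.Perm (Leaf n)) ℓ K
              · rfl
              · exact absurd (hsupp ℓ hbv) (Finset.notMem_empty _)
          exact ih g (by rw [hk1]; exact hSt1)
        | insert a T' ha ihT =>
          intro hTsub g hSt hsupp
          have hT'sub : ∀ ℓ₀ ∈ T', ∀ s : Fin n, K ≤ s → ℓ₀ s = false :=
            fun ℓ₀ h => hTsub ℓ₀ (Finset.mem_insert_of_mem h)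
          by_cases hba : eb (g : Equiv.Perm (Leaf n)) a K = true
          · set g' : ↥(treeGroup n) := g * (c a)⁻¹ with hg'
            have hSt' : St k g' := St_mul hSt (St_inv (hcSt a))
            have hIg' : ∀ ℓ : Leaf n, I2 (eb (g' : Equiv.Perm (Leaf n)) ℓ K) =
                I2 (eb (g : Equiv.Perm (Leaf n)) ℓ K) +
                I2 (eb ((c a : ↥(treeGroup n)) : Equiv.Perm (Leaf n)) ℓ K) := by
              intro ℓ
              rw [hg', pat_mul g (St_inv (hcSt a)) ℓ, pat_inv (hcSt a) ℓ]
            have hsupp' : ∀ ℓ : Leaf n, eb (g' : Equiv.Perm (Leaf n)) ℓ K = true →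
                trc k ℓ ∈ T' := by
              intro ℓ hb
              by_cases hag : Ag k ℓ a
              · exfalso
                have he1 : eb (g : Equiv.Perm (Leaf n)) ℓ K =
                    eb (g : Equiv.Perm (Leaf n)) a K := eb_congr g.2 K hag
                have he2 := hIg' ℓ
                rw [hb, he1, hba, hcpat a ℓ, decide_eq_true hag] at he2
                exact absurd he2 (by decide)
              · have he2 := hIg' ℓ
                rw [hb, hcpat a ℓ, decide_eq_false hag] at he2
                have he3 : eb (g : Equiv.Perm (Leaf n)) ℓ K = true := by
                  cases hbv : eb (g : Equiv.Perm (Leaf n)) ℓ K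
                  · rw [hbv] at he2
                    exact absurd he2 (by decide)
                  · rfl
                have h4 := hsupp ℓ he3
                rcases Finset.mem_insert.mp h4 with h5 | h5
                · exfalso
                  apply hag
                  rw [← h5]
                  exact ag_symm (trc_ag k ℓ)
                · exact h5
            have hmem' := ihT hT'sub g' hSt' hsupp'
            have hfact : g = g' * (c a) := by rw [hg']; group
            rw [hfact]
            exact mul_mem hmem' (hcmem a)
          · apply ihT hT'sub g hSt
            intro ℓ hb
            rcases Finset.mem_insert.mp (hsupp ℓ hb) with h5 | h5
            · exfalso
              apply hba
              have hag : Ag k ℓ a := by rw [← h5]; exact ag_symm (trc_ag k ℓ)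
              rw [← eb_congr g.2 K hag]
              exact hb
            · exact h5
      apply inner (Tm n K) ?_ g hg ?_
      · intro ℓ₀ h
        simp only [Tm, Finset.mem_filter, Finset.mem_univ, true_and] at h
        exact h
      · intro ℓ _
        exact trc_mem K ℓ

end Aux4
section Aux5

open Subgroup

variable {n : ℕ}

/-- The kernel of the level-`m` parity, as a subgroup. -/
def Ssub (n : ℕ) (m : Fin n) : Subgroup ↥(treeGroup n) where
  carrier := {g | svU g m = 0}
  one_mem' := svU_one m
  mul_mem' := by
    intro a b ha hb
    simp only [Set.mem_setOf_eq] at ha hb ⊢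
    rw [svU_mul, ha, hb, add_zero]
  inv_mem' := by
    intro a ha
    simp only [Set.mem_setOf_eq] at ha ⊢
    rw [svU_inv]
    exact ha

lemma mem_Ssub {g : ↥(treeGroup n)} {m : Fin n} : g ∈ Ssub n m ↔ svU g m = 0 := Iff.rfl

lemma Ssub_coatom (m : Fin n) : IsCoatom (Ssub n m) := by
  constructor
  · intro htop
    have hmem : aEl n (n - (m : ℕ)) ∈ Ssub n m := htop ▸ Subgroup.mem_top _
    rw [mem_Ssub, svU_aEl, if_pos (by have := m.2; omega)] at hmem
    exact absurd hmem (by decide)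
  · intro K hK
    obtain ⟨k₀, hk₀K, hk₀n⟩ := SetLike.exists_of_lt hK
    rw [eq_top_iff']
    intro g
    have hle : Ssub n m ≤ K := le_of_lt hK
    rcases z2_cases (svU g m) with h0 | h1
    · exact hle h0
    · have hk1 : svU k₀ m = 1 := by
        rcases z2_cases (svU k₀ m) with h | h
        · exact absurd h hk₀n
        · exact h
      have hmem0 : g * k₀⁻¹ ∈ Ssub n m := by
        rw [mem_Ssub, svU_mul, svU_inv, h1, hk1]
        decide
      have := mul_mem (hle hmem0) hk₀K
      rwa [inv_mul_cancel_right] at this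

lemma coatom_contains (M : Subgroup ↥(treeGroup n)) (hM : IsCoatom M)
    (g : ↥(treeGroup n)) (hg0 : ∀ m : Fin n, svU g m = 0) : g ∈ M := by
  haveI : Fact (Nat.Prime 2) := ⟨Nat.prime_two⟩
  haveI hnil : Group.IsNilpotent ↥(treeGroup n) := treeGroup_isPGroup.isNilpotent
  haveI hnorm : M.Normal :=
    Subgroup.NormalizerCondition.normal_of_coatom M normalizerCondition_of_isNilpotent hM
  have hQp : IsPGroup 2 (↥(treeGroup n) ⧸ M) := treeGroup_isPGroup.to_quotient M
  have hs : Function.Surjective (QuotientGroup.mk' M) := QuotientGroup.mk'_surjective M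
  have hsub : ∀ K : Subgroup (↥(treeGroup n) ⧸ M), K = ⊥ ∨ K = ⊤ := by
    intro K
    have hMle : M ≤ K.comap (QuotientGroup.mk' M) := by
      intro x hx
      rw [Subgroup.mem_comap]
      have hx1 : QuotientGroup.mk' M x = 1 := (QuotientGroup.eq_one_iff x).mpr hx
      rw [hx1]
      exact K.one_mem
    rcases hMle.lt_or_eq with hlt | heq
    · right
      have htop := hM.2 _ hlt
      calc K = (K.comap (QuotientGroup.mk' M)).map (QuotientGroup.mk' M) :=
            (Subgroup.map_comap_eq_self_of_surjective hs K).symm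
        _ = (⊤ : Subgroup ↥(treeGroup n)).map (QuotientGroup.mk' M) := by rw [htop]
        _ = ⊤ := Subgroup.map_top_of_surjective _ hs
    · left
      calc K = (K.comap (QuotientGroup.mk' M)).map (QuotientGroup.mk' M) :=
            (Subgroup.map_comap_eq_self_of_surjective hs K).symm
        _ = M.map (QuotientGroup.mk' M) := by rw [← heq]
        _ = ⊥ := by
            rw [Subgroup.map_eq_bot_iff, QuotientGroup.ker_mk']
  have hnontriv : Nat.card (↥(treeGroup n) ⧸ M) ≠ 1 := by
    intro hc
    apply hM.1
    have hsing : Subsingleton (↥(treeGroup n) ⧸ M) :=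
      (Nat.card_eq_one_iff_unique.mp hc).1
    rw [eq_top_iff']
    intro z
    exact (QuotientGroup.eq_one_iff z).mp (Subsingleton.elim _ _)
  have hsq : ∀ q : ↥(treeGroup n) ⧸ M, q * q = 1 := by
    intro q
    rcases hsub (Subgroup.zpowers (q * q)) with hb | ht
    · rwa [Subgroup.zpowers_eq_bot] at hb
    · exfalso
      have hq2 : q * q = q ^ 2 := (sq q).symm
      have hc1 : orderOf (q ^ 2) = Nat.card (↥(treeGroup n) ⧸ M) := by
        rw [← Nat.card_zpowers, ← hq2, ht, Subgroup.card_top]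
      have hztop : Subgroup.zpowers q = ⊤ := by
        rw [eq_top_iff, ← ht, Subgroup.zpowers_le]
        exact ⟨2, by show q ^ (2 : ℤ) = q * q; rw [zpow_two]⟩
      have hc2 : orderOf q = Nat.card (↥(treeGroup n) ⧸ M) := by
        rw [← Nat.card_zpowers, hztop, Subgroup.card_top]
      have ho2 : orderOf (q ^ 2) = orderOf q / Nat.gcd (orderOf q) 2 := orderOf_pow q
      obtain ⟨e, he⟩ := IsPGroup.iff_orderOf.mp hQp q
      have hcpos : 0 < Nat.card (↥(treeGroup n) ⧸ M) := Nat.card_pos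
      rcases Nat.eq_zero_or_pos e with he0 | hepos
      · rw [he0, pow_zero] at he
        rw [hc2] at he
        exact hnontriv he
      · have h2dvd : 2 ∣ orderOf q := by
          rw [he]
          exact dvd_pow_self 2 (by omega)
        have hgcd : Nat.gcd (orderOf q) 2 = 2 := Nat.gcd_eq_right h2dvd
        rw [hgcd, hc1, hc2] at ho2
        omega
  have hinv : ∀ q : ↥(treeGroup n) ⧸ M, q⁻¹ = q := fun q => inv_eq_of_mul_eq_one_right (hsq q)
  have hcomm : ∀ a b : ↥(treeGroup n) ⧸ M, a * b = b * a := by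
    intro a b
    calc a * b = (a * b)⁻¹ := (hinv _).symm
      _ = b⁻¹ * a⁻¹ := mul_inv_rev a b
      _ = b * a := by rw [hinv, hinv]
  letI : CommGroup (↥(treeGroup n) ⧸ M) :=
    { (inferInstance : Group (↥(treeGroup n) ⧸ M)) with mul_comm := hcomm }
  have hpowmod : ∀ (q : ↥(treeGroup n) ⧸ M) (a : ℕ), q ^ a = q ^ (a % 2) := by
    intro q a
    conv_lhs => rw [← Nat.div_add_mod a 2]
    rw [pow_add, pow_mul]
    have hq1 : q ^ 2 = 1 := by rw [sq]; exact hsq q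
    rw [hq1, one_pow, one_mul]
  have hord : ∀ (q : ↥(treeGroup n) ⧸ M) (u v : ZMod 2),
      q ^ ((u + v).val) = q ^ u.val * q ^ v.val := by
    intro q u v
    rw [ZMod.val_add, ← hpowmod q (u.val + v.val), pow_add]
  have hpow01 : ∀ (x : ↥(treeGroup n) ⧸ M) (c : Prop) (_ : Decidable c),
      x ^ (if c then (1 : ZMod 2) else 0).val = if c then x else 1 := by
    intro x c hc
    by_cases h : c
    · rw [if_pos h, if_pos h, ZMod.val_one, pow_one]
    · rw [if_neg h, if_neg h, ZMod.val_zero, pow_zero]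
  set H : Subgroup ↥(treeGroup n) :=
    { carrier := {g | QuotientGroup.mk' M g =
        ∏ m : Fin n, (QuotientGroup.mk' M (aEl n (n - (m : ℕ)))) ^ (svU g m).val}
      one_mem' := by
        simp only [Set.mem_setOf_eq, map_one]
        rw [Finset.prod_eq_one]
        intro m _
        rw [svU_one, ZMod.val_zero, pow_zero]
      mul_mem' := by
        intro a b ha hb
        simp only [Set.mem_setOf_eq] at ha hb ⊢
        rw [map_mul, ha, hb, ← Finset.prod_mul_distrib]
        apply Finset.prod_congr rfl
        intro m _
        rw [svU_mul, hord]
      inv_mem' := by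
        intro a ha
        simp only [Set.mem_setOf_eq] at ha ⊢
        rw [map_inv, ha, ← Finset.prod_inv_distrib]
        apply Finset.prod_congr rfl
        intro m _
        rw [svU_inv, hinv] } with hH
  have hAsub : Aset n ⊆ (H : Set ↥(treeGroup n)) := by
    rintro _ ⟨k', hk1, hkn, rfl⟩
    show QuotientGroup.mk' M (aEl n k') =
      ∏ m : Fin n, (QuotientGroup.mk' M (aEl n (n - (m : ℕ)))) ^ (svU (aEl n k') m).val
    have hnk : n - k' < n := by omega
    have hterm : ∀ m : Fin n, (QuotientGroup.mk' M (aEl n (n - (m : ℕ)))) ^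
        (svU (aEl n k') m).val =
        if m = (⟨n - k', hnk⟩ : Fin n) then QuotientGroup.mk' M (aEl n (n - (m : ℕ))) else 1 := by
      intro m
      rw [svU_aEl]
      have hiff : ((m : ℕ) = n - k') ↔ (m = (⟨n - k', hnk⟩ : Fin n)) := by
        constructor
        · intro h; exact Fin.ext h
        · intro h; rw [h]
      by_cases h : (m : ℕ) = n - k'
      · rw [if_pos h, if_pos (hiff.mp h), ZMod.val_one, pow_one]
      · rw [if_neg h, if_neg (fun hc => h (hiff.mpr hc)), ZMod.val_zero, pow_zero]
    rw [Finset.prod_congr rfl (fun m _ => hterm m), Finset.prod_ite_eq' Finset.univ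
      (⟨n - k', hnk⟩ : Fin n) (fun m => QuotientGroup.mk' M (aEl n (n - (m : ℕ))))]
    rw [if_pos (Finset.mem_univ _)]
    congr 2
    show k' = n - (n - k')
    omega
  have hmemH : g ∈ H := (Subgroup.closure_le H).mpr hAsub (gen_top g)
  have hg1 : QuotientGroup.mk' M g = 1 := by
    have := hmemH
    simp only [hH, Subgroup.mem_mk, Set.mem_setOf_eq] at this
    rw [this, Finset.prod_eq_one]
    intro m _
    rw [hg0 m, ZMod.val_zero, pow_zero]
  exact (QuotientGroup.eq_one_iff g).mp hg1

lemma mem_frattini_iff (g : ↥(treeGroup n)) :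
    g ∈ frattini ↥(treeGroup n) ↔ ∀ m : Fin n, svU g m = 0 := by
  constructor
  · intro h m
    exact (frattini_le_coatom (Ssub_coatom m)) h
  · intro h
    rw [frattini, Order.radical]
    rw [Subgroup.mem_iInf]
    intro M
    rw [Subgroup.mem_iInf]
    intro hM
    exact coatom_contains M hM g h

end Aux5
/-- for any `n`-odometer `w_n ∈ W_n`, the set
`{g ∈ W_n : w_n g is an n-odometer}` equals the Frattini subgroup `Φ(W_n)`. -/
theorem odometer_set_eq_frattini (n : ℕ) (w : ↥(treeGroup n))
    (hw : IsOdometer n (w : Equiv.Perm (Leaf n))) :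
    {g : ↥(treeGroup n) | IsOdometer n ((w * g : ↥(treeGroup n)) : Equiv.Perm (Leaf n))} =
      (frattini ↥(treeGroup n) : Set ↥(treeGroup n)) := by
  ext g
  simp only [Set.mem_setOf_eq, SetLike.mem_coe]
  have hw1 : ∀ m : Fin n, sv (w : Equiv.Perm (Leaf n)) m = 1 := (odometer_iff w.2).mp hw
  constructor
  · intro h
    rw [mem_frattini_iff]
    intro m
    have h1 := (odometer_iff (w * g).2).mp h m
    rw [Subgroup.coe_mul, sv_mul w.2 g.2, hw1 m] at h1
    show sv (g : Equiv.Perm (Leaf n)) m = 0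
    rcases z2_cases (sv (g : Equiv.Perm (Leaf n)) m) with h0 | h1'
    · exact h0
    · rw [h1'] at h1
      exact absurd h1 (by decide)
  · intro h
    rw [mem_frattini_iff] at h
    rw [odometer_iff (w * g).2]
    intro m
    rw [Subgroup.coe_mul, sv_mul w.2 g.2, hw1 m,
      show sv (g : Equiv.Perm (Leaf n)) m = svU g m from rfl, h m, add_zero]
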